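/- Let p ∈ (0,1/2), q := 1 − p, and let Z_0, Z_1, Z_2, … be i.i.d. with P(Z_0 = 1) = p and P(Z_0 = −1) = q. Define X_0 := 0, X_n := max{X_{n−1} + Z_{n−1}, 0}, τ_0 := inf{k > 0 : X_k = 0}, and let ζ := max{X_k : 0 ≤ k < τ_0} be the maximum over the first cycle. Then for every integer m ≥ 1: P(ζ ≤ m) = q + p · ((q/p)^{m+1} − (q/p)) / ((q/p)^{m+1} − 1). -/

import Mathlib

open MeasureTheory ProbabilityTheory Filter
open scoped ENNReal

namespace LindAux
open Finset


def psum (x : ℤ) (η : ℕ → ℤ) (k : ℕ) : ℤ := x + ∑ i ∈ Finset.range k, η i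
lemma psum_succ (x : ℤ) (η : ℕ → ℤ) (k : ℕ) :
    psum x η (k + 1) = psum x η k + η k := by
  simp [psum, Finset.sum_range_succ]; ring
lemma psum_shift (x : ℤ) (η : ℕ → ℤ) (k : ℕ) :
    psum x η (k + 1) = psum (x + η 0) (fun i => η (i + 1)) k := by
  induction k with
  | zero => simp [psum]
  | succ k ih => rw [psum_succ, ih, psum_succ]
lemma psum_congr {x : ℤ} {η η' : ℕ → ℤ} {k : ℕ} (h : ∀ i < k, η i = η' i) :
    psum x η k = psum x η' k := by
  unfold psum; congr 1
  exact Finset.sum_congr rfl fun i hi => h i (Finset.mem_range.mp hi)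
def Good (mm : ℕ) (x tgt : ℤ) (n : ℕ) (η : ℕ → ℤ) : Prop :=
  psum x η n = tgt ∧ ∀ k < n, 0 < psum x η k ∧ psum x η k ≤ (mm : ℤ)
lemma good_congr {mm : ℕ} {x tgt : ℤ} {n : ℕ} {η η' : ℕ → ℤ}
    (h : ∀ i < n, η i = η' i) : Good mm x tgt n η ↔ Good mm x tgt n η' := by
  unfold Good
  rw [psum_congr (fun i hi => h i hi)]
  constructor <;> rintro ⟨h1, h2⟩ <;> refine ⟨h1, fun k hk => ?_⟩
  · rw [← psum_congr (fun i hi => h i (lt_of_lt_of_le hi hk.le))]; exact h2 k hk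
  · rw [psum_congr (fun i hi => h i (lt_of_lt_of_le hi hk.le))]; exact h2 k hk
def pad (n : ℕ) (ε : Fin n → ℤ) : ℕ → ℤ := fun i => if h : i < n then ε ⟨i, h⟩ else 1
lemma pad_fin {n : ℕ} (ε : Fin n → ℤ) (i : Fin n) : pad n ε i = ε i := by
  simp [pad, i.isLt]

variable {Ω : Type*} [MeasurableSpace Ω] (P : Measure Ω) (Z : ℕ → Ω → ℤ)

noncomputable def w (z : ℤ) : ℝ≥0∞ := P (Z 0 ⁻¹' {z})

open Classical in
noncomputable def goods (mm : ℕ) (x tgt : ℤ) (n : ℕ) : Finset (Fin n → ℤ) :=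
  (Fintype.piFinset fun _ : Fin n => ({1, -1} : Finset ℤ)).filter
    (fun ε => Good mm x tgt n (pad n ε))

noncomputable def Phi (mm : ℕ) (x tgt : ℤ) (n : ℕ) : ℝ≥0∞ :=
  ∑ ε ∈ goods mm x tgt n, ∏ i : Fin n, w P Z (ε i)

def Ev (mm : ℕ) (s : ℕ) (x tgt : ℤ) (n : ℕ) : Set Ω :=
  {ω | Good mm x tgt n fun i => Z (s + i) ω}

def Cell (s n : ℕ) (ε : Fin n → ℤ) : Set Ω :=
  ⋂ i ∈ Finset.range n, Z (s + i) ⁻¹' {pad n ε i}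

def Gset (s n : ℕ) : Set Ω := ⋂ i ∈ Finset.range n, Z (s + i) ⁻¹' ({1, -1} : Set ℤ)

/-- Decomposition of the walk event into cells, inside the good set. -/
lemma Ev_inter_Gset (mm : ℕ) (s : ℕ) (x tgt : ℤ) (n : ℕ) :
    Ev Z mm s x tgt n ∩ Gset Z s n = ⋃ ε ∈ goods mm x tgt n, Cell Z s n ε := by
  classical
  ext ω
  simp only [Set.mem_inter_iff, Set.mem_iUnion, goods, Finset.mem_filter,
    Fintype.mem_piFinset, Cell, Gset, Ev, Set.mem_iInter, Finset.mem_range,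
    Set.mem_preimage, Set.mem_singleton_iff, Set.mem_setOf_eq]
  constructor
  · rintro ⟨hev, hg⟩
    refine ⟨fun i : Fin n => Z (s + i) ω, ⟨fun i => ?_, ?_⟩, fun i hi => ?_⟩
    · have := hg i i.isLt
      simpa [Finset.mem_insert] using this
    · refine (good_congr (η := pad n (fun i : Fin n => Z (s + ↑i) ω)) (fun i hi => ?_)).mpr hev
      show dite _ _ _ = _
      rw [dif_pos hi]
    · show Z (s + i) ω = dite _ _ _
      rw [dif_pos hi]
  · rintro ⟨ε, ⟨hpm, hgood⟩, hcell⟩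
    constructor
    · exact (good_congr (fun i hi => (hcell i hi))).mpr hgood
    · intro i hi
      rw [hcell i hi]
      show dite _ _ _ ∈ _
      rw [dif_pos hi]
      simpa using hpm ⟨i, hi⟩

lemma Cell_disjoint {s n : ℕ} {ε ε' : Fin n → ℤ} (hne : ε ≠ ε') :
    Disjoint (Cell Z s n ε) (Cell Z s n ε') := by
  rw [Set.disjoint_left]
  intro ω h1 h2
  apply hne
  funext i
  simp only [Cell, Set.mem_iInter, Finset.mem_range, Set.mem_preimage,
    Set.mem_singleton_iff] at h1 h2
  have e1 := h1 i i.isLt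
  have e2 := h2 i i.isLt
  rw [pad_fin ε i] at e1
  rw [pad_fin ε' i] at e2
  rw [← e1, ← e2]

variable (hmeas : ∀ n, Measurable (Z n))
  (hindep : iIndepFun Z P)
  (hid : ∀ n, IdentDistrib (Z n) (Z 0) P P)

include hmeas in
lemma measurableSet_Cell (s n : ℕ) (ε : Fin n → ℤ) : MeasurableSet (Cell Z s n ε) :=
  MeasurableSet.biInter (Set.to_countable _)
    (fun i _ => (hmeas (s + i)) (measurableSet_singleton _))


include hmeas in
lemma measurableSet_Ev (mm s : ℕ) (x tgt : ℤ) (n : ℕ) :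
    MeasurableSet (Ev Z mm s x tgt n) := by
  have hps : ∀ k, Measurable fun ω => psum x (fun i => Z (s + i) ω) k := by
    intro k
    unfold psum
    exact measurable_const.add (Finset.measurable_sum _ fun i _ => hmeas (s + i))
  have : Ev Z mm s x tgt n =
      ((fun ω => psum x (fun i => Z (s + i) ω) n) ⁻¹' {tgt}) ∩
      ⋂ (k : ℕ) (_ : k < n),
        ((fun ω => psum x (fun i => Z (s + i) ω) k) ⁻¹' (Set.Ioc 0 (mm : ℤ))) := by
    ext ω
    simp [Ev, Good, Set.mem_iInter, Set.mem_Ioc]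
  rw [this]
  exact ((hps n) (measurableSet_singleton _)).inter
    (MeasurableSet.iInter fun k => MeasurableSet.iInter fun _ =>
      (hps k) measurableSet_Ioc)

section
include hindep hid

lemma meas_cells (T : Finset ℕ) (g : ℕ → ℤ) :
    P (⋂ i ∈ T, Z i ⁻¹' {g i}) = ∏ i ∈ T, w P Z (g i) := by
  rw [(iIndepFun_iff_measure_inter_preimage_eq_mul.mp hindep) T
      (sets := fun i => ({g i} : Set ℤ)) (fun i _ => measurableSet_singleton (g i))]
  exact Finset.prod_congr rfl fun i _ =>
    (hid i).measure_mem_eq (measurableSet_singleton _)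

/-- measure of a cell, with a prefixed extra coordinate `s₀ < s` pinned to value `c`. -/
lemma meas_inter_Cell {s₀ s : ℕ} (hs : s₀ < s) (c : ℤ) (n : ℕ) (ε : Fin n → ℤ) :
    P (Z s₀ ⁻¹' {c} ∩ Cell Z s n ε) = w P Z c * ∏ i : Fin n, w P Z (ε i) := by
  classical
  set T : Finset ℕ := (Finset.range n).image (s + ·) with hT
  have hs₀T : s₀ ∉ T := by
    simp only [hT, Finset.mem_image, Finset.mem_range]
    rintro ⟨i, _, rfl⟩
    omega
  set g : ℕ → ℤ := fun j => if j = s₀ then c else pad n ε (j - s) with hg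
  have h1 : Z s₀ ⁻¹' {c} ∩ Cell Z s n ε = ⋂ j ∈ insert s₀ T, Z j ⁻¹' {g j} := by
    ext ω
    simp only [Set.mem_inter_iff, Set.mem_iInter, Finset.mem_insert, Cell,
      Finset.mem_range, Set.mem_preimage, Set.mem_singleton_iff, hT,
      Finset.mem_image]
    constructor
    · rintro ⟨hc, hcell⟩ j hj
      rcases hj with rfl | ⟨i, hi, rfl⟩
      · simpa [hg] using hc
      · have : s + i ≠ s₀ := by omega
        simp only [hg, if_neg this, Nat.add_sub_cancel_left]
        exact hcell i hi
    · intro h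
      constructor
      · simpa [hg] using h s₀ (Or.inl rfl)
      · intro i hi
        have := h (s + i) (Or.inr ⟨i, hi, rfl⟩)
        have hne : s + i ≠ s₀ := by omega
        simpa [hg, if_neg hne, Nat.add_sub_cancel_left] using this
  rw [h1, meas_cells P Z hindep hid, Finset.prod_insert hs₀T]
  congr 1
  · simp [hg]
  · rw [Finset.prod_image (by intro a _ b _ h; have h' : s + a = s + b := h; omega)]
    rw [← Fin.prod_univ_eq_prod_range (fun i => w P Z (g (s + i))) n]
    refine Finset.prod_congr rfl fun i _ => ?_
    congr 1
    have hne : s + (i : ℕ) ≠ s₀ := by omega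
    simp only [hg, if_neg hne, Nat.add_sub_cancel_left]
    exact pad_fin ε i

lemma meas_Cell (s n : ℕ) (ε : Fin n → ℤ) :
    P (Cell Z s n ε) = ∏ i : Fin n, w P Z (ε i) := by
  have h1 : Cell Z s n ε = ⋂ j ∈ (Finset.range n).image (s + ·), Z j ⁻¹' {pad n ε (j - s)} := by
    unfold Cell
    ext ω
    simp only [Set.mem_iInter, Finset.mem_image, Finset.mem_range]
    constructor
    · rintro h j ⟨i, hi, rfl⟩
      simpa [Nat.add_sub_cancel_left] using h i hi
    · intro h i hi
      have := h (s + i) ⟨i, hi, rfl⟩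
      simpa [Nat.add_sub_cancel_left] using this
  rw [h1, meas_cells P Z hindep hid, Finset.prod_image (by intro a _ b _ h; have h' : s + a = s + b := h; omega)]
  rw [← Fin.prod_univ_eq_prod_range (fun i => w P Z (pad n ε ((s + i) - s))) n]
  refine Finset.prod_congr rfl fun i _ => ?_
  congr 1
  rw [Nat.add_sub_cancel_left]
  exact pad_fin ε i

end


def Rev (mm : ℕ) (s : ℕ) (x tgt : ℤ) : Set Ω := ⋃ n, Ev Z mm s x tgt n

lemma Ev_disjoint {mm : ℕ} {tgt : ℤ} (htgt : ¬(0 < tgt ∧ tgt ≤ (mm : ℤ)))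
    (s : ℕ) (x : ℤ) : Pairwise fun n n' => Disjoint (Ev Z mm s x tgt n) (Ev Z mm s x tgt n') := by
  have key : ∀ n n', n < n' → Disjoint (Ev Z mm s x tgt n) (Ev Z mm s x tgt n') := by
    intro n n' hlt
    rw [Set.disjoint_left]
    rintro ω ⟨h1, _⟩ ⟨_, h2⟩
    exact htgt (h1 ▸ h2 n hlt)
  intro n n' hne
  rcases hne.lt_or_gt with h | h
  · exact key n n' h
  · exact (key n' n h).symm

variable (hmeas : ∀ n, Measurable (Z n))
  (hindep : iIndepFun Z P)
  (hid : ∀ n, IdentDistrib (Z n) (Z 0) P P)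
  (hone : w P Z 1 + w P Z (-1) = 1)

include hmeas hid hone in
lemma meas_pm [IsProbabilityMeasure P] (k : ℕ) : P (Z k ⁻¹' ({1, -1} : Set ℤ)) = 1 := by
  have hsplit : (Z k ⁻¹' ({1, -1} : Set ℤ)) = Z k ⁻¹' {1} ∪ Z k ⁻¹' {-1} := by
    ext ω; simp [Set.mem_insert_iff]
  rw [hsplit, measure_union ?_ ((hmeas k) (measurableSet_singleton _))]
  · rw [(hid k).measure_mem_eq (measurableSet_singleton (1 : ℤ)),
      (hid k).measure_mem_eq (measurableSet_singleton (-1 : ℤ))]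
    exact hone
  · rw [Set.disjoint_left]
    rintro ω h1 h2
    simp only [Set.mem_preimage, Set.mem_singleton_iff] at h1 h2
    omega

include hmeas hid hone in
lemma Gset_compl_null [IsProbabilityMeasure P] (s n : ℕ) : P (Gset Z s n)ᶜ = 0 := by
  have h1 : (Gset Z s n)ᶜ = ⋃ i, ⋃ (_ : i ∈ Finset.range n), (Z (s + i) ⁻¹' ({1, -1} : Set ℤ))ᶜ := by
    rw [Gset, Set.compl_iInter₂]
  rw [h1]
  refine measure_iUnion_null fun i => measure_iUnion_null fun _ => ?_
  have hms : MeasurableSet (Z (s + i) ⁻¹' ({1, -1} : Set ℤ)) :=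
    (hmeas (s + i)) ((measurableSet_singleton (-1 : ℤ)).insert 1)
  rw [measure_compl hms (measure_ne_top _ _), meas_pm P Z hmeas hid hone, measure_univ, tsub_self]

include hmeas hid hone hindep in
lemma meas_Ev [IsProbabilityMeasure P] (mm s : ℕ) (x tgt : ℤ) (n : ℕ) :
    P (Ev Z mm s x tgt n) = Phi P Z mm x tgt n := by
  have hG : MeasurableSet (Gset Z s n) :=
    MeasurableSet.biInter (Set.to_countable _)
      (fun i _ => (hmeas (s + i)) ((measurableSet_singleton (-1 : ℤ)).insert 1))
  have h1 : P (Ev Z mm s x tgt n) = P (Ev Z mm s x tgt n ∩ Gset Z s n) := by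
    rw [← measure_inter_add_diff (Ev Z mm s x tgt n) hG]
    have : P (Ev Z mm s x tgt n \ Gset Z s n) = 0 :=
      measure_mono_null (fun ω h => h.2) (Gset_compl_null P Z hmeas hid hone s n)
    rw [this, add_zero]
  rw [h1, Ev_inter_Gset, measure_biUnion_finset
    (fun ε _ ε' _ hne => Cell_disjoint Z hne)
    (fun ε _ => measurableSet_Cell Z hmeas s n ε)]
  exact Finset.sum_congr rfl fun ε _ => meas_Cell P Z hindep hid s n ε

include hmeas hid hone hindep in
lemma meas_inter_Ev [IsProbabilityMeasure P] {s₀ s : ℕ} (hs : s₀ < s) (c : ℤ)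
    (mm : ℕ) (x tgt : ℤ) (n : ℕ) :
    P (Z s₀ ⁻¹' {c} ∩ Ev Z mm s x tgt n) = w P Z c * Phi P Z mm x tgt n := by
  have hG : MeasurableSet (Gset Z s n) :=
    MeasurableSet.biInter (Set.to_countable _)
      (fun i _ => (hmeas (s + i)) ((measurableSet_singleton (-1 : ℤ)).insert 1))
  have h1 : P (Z s₀ ⁻¹' {c} ∩ Ev Z mm s x tgt n)
      = P ((Z s₀ ⁻¹' {c} ∩ Ev Z mm s x tgt n) ∩ Gset Z s n) := by
    rw [← measure_inter_add_diff (Z s₀ ⁻¹' {c} ∩ Ev Z mm s x tgt n) hG]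
    have : P ((Z s₀ ⁻¹' {c} ∩ Ev Z mm s x tgt n) \ Gset Z s n) = 0 :=
      measure_mono_null (fun ω h => h.2) (Gset_compl_null P Z hmeas hid hone s n)
    rw [this, add_zero]
  rw [h1, Set.inter_assoc, Ev_inter_Gset, Set.inter_iUnion₂]
  rw [measure_biUnion_finset
    (fun ε hε ε' hε' hne => ((Cell_disjoint Z hne).mono Set.inter_subset_right Set.inter_subset_right))
    (fun ε _ => ((hmeas s₀) (measurableSet_singleton _)).inter (measurableSet_Cell Z hmeas s n ε))]
  rw [Phi, Finset.mul_sum]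
  exact Finset.sum_congr rfl fun ε _ => meas_inter_Cell P Z hindep hid hs c n ε

include hmeas hid hone hindep in
lemma meas_Rev [IsProbabilityMeasure P] {mm : ℕ} {tgt : ℤ} (htgt : ¬(0 < tgt ∧ tgt ≤ (mm : ℤ)))
    (s : ℕ) (x : ℤ) :
    P (Rev Z mm s x tgt) = ∑' n, Phi P Z mm x tgt n := by
  rw [Rev, measure_iUnion (Ev_disjoint Z htgt s x) (fun n => measurableSet_Ev Z hmeas mm s x tgt n)]
  exact tsum_congr fun n => meas_Ev P Z hmeas hindep hid hone mm s x tgt n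

include hmeas hid hone hindep in
lemma meas_inter_Rev [IsProbabilityMeasure P] {mm : ℕ} {tgt : ℤ} (htgt : ¬(0 < tgt ∧ tgt ≤ (mm : ℤ)))
    {s₀ s : ℕ} (hs : s₀ < s) (c : ℤ) (x : ℤ) :
    P (Z s₀ ⁻¹' {c} ∩ Rev Z mm s x tgt) = w P Z c * ∑' n, Phi P Z mm x tgt n := by
  rw [Rev, Set.inter_iUnion, measure_iUnion ?_ (fun n => ((hmeas s₀) (measurableSet_singleton _)).inter (measurableSet_Ev Z hmeas mm s x tgt n))]
  · rw [← ENNReal.tsum_mul_left]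
    exact tsum_congr fun n => meas_inter_Ev P Z hmeas hindep hid hone hs c mm x tgt n
  · exact fun n n' hne => ((Ev_disjoint Z htgt s x) hne).mono Set.inter_subset_right Set.inter_subset_right


omit [MeasurableSpace Ω] in
lemma good_shift {mm : ℕ} {x tgt : ℤ} (hx1 : 0 < x) (hxm : x ≤ (mm : ℤ)) (n : ℕ) (η : ℕ → ℤ) :
    Good mm x tgt (n + 1) η ↔ Good mm (x + η 0) tgt n (fun i => η (i + 1)) := by
  unfold Good
  constructor
  · rintro ⟨h1, h2⟩
    refine ⟨by rw [← psum_shift]; exact h1, fun k hk => ?_⟩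
    rw [← psum_shift]
    exact h2 (k + 1) (by omega)
  · rintro ⟨h1, h2⟩
    refine ⟨by rw [psum_shift]; exact h1, fun k hk => ?_⟩
    cases k with
    | zero => simpa [psum] using ⟨hx1, hxm⟩
    | succ j => rw [psum_shift]; exact h2 j (by omega)

lemma Ev_zero_empty {mm : ℕ} {x tgt : ℤ} (hxt : x ≠ tgt) (s : ℕ) :
    Ev Z mm s x tgt 0 = ∅ := by
  ext ω
  simp only [Ev, Set.mem_setOf_eq, Set.mem_empty_iff_false, iff_false, Good, psum]
  rintro ⟨h, -⟩
  exact hxt (by simpa using h)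

lemma Ev_step {mm : ℕ} {x tgt : ℤ} (hx1 : 0 < x) (hxm : x ≤ (mm : ℤ)) (c : ℤ) (n : ℕ) :
    Ev Z mm 0 x tgt (n + 1) ∩ Z 0 ⁻¹' {c} = Ev Z mm 1 (x + c) tgt n ∩ Z 0 ⁻¹' {c} := by
  ext ω
  simp only [Set.mem_inter_iff, Ev, Set.mem_setOf_eq, Set.mem_preimage,
    Set.mem_singleton_iff]
  constructor
  · rintro ⟨hg, hc⟩
    refine ⟨?_, hc⟩
    rw [good_shift hx1 hxm] at hg
    have e0 : Z (0 + 0) ω = c := by simpa using hc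
    rw [e0] at hg
    exact (good_congr (fun i hi => by norm_num [Nat.add_comm])).mp hg
  · rintro ⟨hg, hc⟩
    refine ⟨?_, hc⟩
    rw [good_shift hx1 hxm]
    have e0 : Z (0 + 0) ω = c := by simpa using hc
    rw [e0]
    exact (good_congr (fun i hi => by norm_num [Nat.add_comm])).mpr hg

/-- splitting a measurable set along two almost-exhaustive disjoint events -/
lemma split_meas [IsProbabilityMeasure P] {S B1 B2 : Set Ω} (hS : MeasurableSet S)
    (hB1 : MeasurableSet B1) (hB2 : MeasurableSet B2) (hd : Disjoint B1 B2)
    (hsum : P B1 + P B2 = 1) : P S = P (S ∩ B1) + P (S ∩ B2) := by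
  have hU : MeasurableSet (B1 ∪ B2) := hB1.union hB2
  have hc : P ((B1 ∪ B2)ᶜ) = 0 := by
    rw [measure_compl hU (measure_ne_top _ _), measure_union hd hB2, measure_univ, hsum,
      tsub_self]
  have h1 : P S = P (S ∩ (B1 ∪ B2)) := by
    rw [← measure_inter_add_diff S hU]
    have : P (S \ (B1 ∪ B2)) = 0 := measure_mono_null (fun ω h => h.2) hc
    rw [this, add_zero]
  rw [h1, Set.inter_union_distrib_left,
    measure_union (hd.mono Set.inter_subset_right Set.inter_subset_right) (hS.inter hB2)]


include hmeas hid hone hindep in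
lemma U_rec [IsProbabilityMeasure P] {mm : ℕ} {tgt x : ℤ} (htgt : ¬(0 < tgt ∧ tgt ≤ (mm : ℤ)))
    (hx1 : 0 < x) (hxm : x ≤ (mm : ℤ)) :
    ∑' n, Phi P Z mm x tgt n =
      w P Z 1 * ∑' n, Phi P Z mm (x + 1) tgt n
        + w P Z (-1) * ∑' n, Phi P Z mm (x + (-1)) tgt n := by
  have hne : x ≠ tgt := fun h => htgt ⟨h ▸ hx1, h ▸ hxm⟩
  have hRev : ∀ c : ℤ, Rev Z mm 0 x tgt ∩ Z 0 ⁻¹' {c}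
      = Z 0 ⁻¹' {c} ∩ Rev Z mm 1 (x + c) tgt := by
    intro c
    ext ω
    simp only [Rev, Set.mem_inter_iff, Set.mem_iUnion]
    constructor
    · rintro ⟨⟨n, hn⟩, hc⟩
      cases n with
      | zero => rw [Ev_zero_empty Z hne] at hn; exact absurd hn (Set.notMem_empty ω)
      | succ k =>
        have hmem : ω ∈ Ev Z mm 1 (x + c) tgt k ∩ Z 0 ⁻¹' {c} := by
          rw [← Ev_step Z hx1 hxm c k]; exact ⟨hn, hc⟩
        exact ⟨hmem.2, k, hmem.1⟩
    · rintro ⟨hc, n, hn⟩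
      have hmem : ω ∈ Ev Z mm 0 x tgt (n + 1) ∩ Z 0 ⁻¹' {c} := by
        rw [Ev_step Z hx1 hxm c n]; exact ⟨hn, hc⟩
      exact ⟨⟨n + 1, hmem.1⟩, hmem.2⟩
  have hRmeas : MeasurableSet (Rev Z mm 0 x tgt) :=
    MeasurableSet.iUnion fun n => measurableSet_Ev Z hmeas mm 0 x tgt n
  have hdisj : Disjoint (Z 0 ⁻¹' ({1} : Set ℤ)) (Z 0 ⁻¹' ({-1} : Set ℤ)) := by
    rw [Set.disjoint_left]
    rintro ω h1 h2
    simp only [Set.mem_preimage, Set.mem_singleton_iff] at h1 h2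
    omega
  calc ∑' n, Phi P Z mm x tgt n = P (Rev Z mm 0 x tgt) :=
        (meas_Rev P Z hmeas hindep hid hone htgt 0 x).symm
    _ = P (Rev Z mm 0 x tgt ∩ Z 0 ⁻¹' {1}) + P (Rev Z mm 0 x tgt ∩ Z 0 ⁻¹' {-1}) :=
        split_meas P hRmeas ((hmeas 0) (measurableSet_singleton _))
          ((hmeas 0) (measurableSet_singleton _)) hdisj hone
    _ = _ := by
        rw [hRev 1, hRev (-1),
          meas_inter_Rev P Z hmeas hindep hid hone htgt (Nat.zero_lt_one) 1 (x + 1),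
          meas_inter_Rev P Z hmeas hindep hid hone htgt (Nat.zero_lt_one) (-1) (x + (-1))]

lemma Phi_succ_eq_zero {mm : ℕ} {x : ℤ} (hx : ¬(0 < x ∧ x ≤ (mm : ℤ))) (tgt : ℤ) (n : ℕ) :
    Phi P Z mm x tgt (n + 1) = 0 := by
  classical
  refine Finset.sum_eq_zero fun ε hε => absurd ?_ hx
  have h := (Finset.mem_filter.mp hε).2
  have h0 := h.2 0 n.succ_pos
  simpa [psum] using h0

lemma Phi_zero_eq (mm : ℕ) (x tgt : ℤ) :
    Phi P Z mm x tgt 0 = if x = tgt then 1 else 0 := by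
  classical
  have hgood : ∀ η : ℕ → ℤ, Good mm x tgt 0 η ↔ x = tgt := by
    intro η
    simp [Good, psum]
  unfold Phi goods
  split_ifs with h
  · rw [Finset.filter_true_of_mem (fun ε _ => (hgood _).mpr h)]
    simp
  · rw [Finset.filter_false_of_mem (fun ε _ => fun hg => h ((hgood _).mp hg))]
    simp

lemma tsum_Phi_eq_one {mm : ℕ} {x tgt : ℤ} (hx : ¬(0 < x ∧ x ≤ (mm : ℤ))) (hxt : x = tgt) :
    ∑' n, Phi P Z mm x tgt n = 1 := by
  rw [tsum_eq_single 0 (fun n hn => by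
    cases n with
    | zero => exact absurd rfl hn
    | succ k => exact Phi_succ_eq_zero P Z hx tgt k)]
  rw [Phi_zero_eq, if_pos hxt]

lemma tsum_Phi_eq_zero {mm : ℕ} {x tgt : ℤ} (hx : ¬(0 < x ∧ x ≤ (mm : ℤ))) (hxt : x ≠ tgt) :
    ∑' n, Phi P Z mm x tgt n = 0 := by
  have hz : ∀ n, Phi P Z mm x tgt n = 0 := by
    intro n
    cases n with
    | zero => rw [Phi_zero_eq, if_neg hxt]
    | succ k => exact Phi_succ_eq_zero P Z hx tgt k
  calc ∑' n, Phi P Z mm x tgt n = ∑' _ : ℕ, (0 : ℝ≥0∞) := tsum_congr hz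
    _ = 0 := tsum_zero

include hmeas hid hone hindep in
lemma tsum_Phi_le_one [IsProbabilityMeasure P] {mm : ℕ} {tgt : ℤ}
    (htgt : ¬(0 < tgt ∧ tgt ≤ (mm : ℤ))) (x : ℤ) :
    ∑' n, Phi P Z mm x tgt n ≤ 1 := by
  rw [← meas_Rev P Z hmeas hindep hid hone htgt 0 x]
  exact prob_le_one

omit [MeasurableSpace Ω] in
/-- Uniqueness for the gambler's ruin recurrence with zero boundary values. -/
lemma rec_one {p q r : ℝ} (hp : 0 < p) (hpq : p + q = 1) (hr : r = q / p) (hq : 0 ≤ q)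
    {m : ℕ} (f : ℕ → ℝ)
    (hrec : ∀ k, k + 1 ≤ m → f (k + 1) = p * f (k + 2) + q * f k)
    (h0 : f 0 = 0) (hm : f (m + 1) = 0) : f 1 = 0 := by
  have hq' : q = 1 - p := by linarith
  have hstep : ∀ k, k + 1 ≤ m → f (k + 2) - f (k + 1) = r * (f (k + 1) - f k) := by
    intro k hk
    have h := hrec k hk
    rw [hq'] at h
    rw [hr, hq', div_mul_eq_mul_div, eq_div_iff hp.ne']
    linear_combination -h
  have hd : ∀ k, k ≤ m → f (k + 1) - f k = r ^ k * (f 1 - f 0) := by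
    intro k
    induction k with
    | zero => intro _; simp
    | succ j ih =>
      intro hk
      rw [hstep j hk, ih (by omega), pow_succ]
      ring
  have htele := Finset.sum_range_sub f (m + 1)
  rw [hm, h0, sub_zero] at htele
  have hsum : (∑ k ∈ Finset.range (m + 1), r ^ k) * (f 1 - f 0) = 0 := by
    calc (∑ k ∈ Finset.range (m + 1), r ^ k) * (f 1 - f 0)
        = ∑ k ∈ Finset.range (m + 1), r ^ k * (f 1 - f 0) := by rw [Finset.sum_mul]
      _ = ∑ k ∈ Finset.range (m + 1), (f (k + 1) - f k) :=
          Finset.sum_congr rfl fun k hk => (hd k (by have := Finset.mem_range.mp hk; omega)).symm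
      _ = 0 := htele
  have hrpos : 0 ≤ r := hr ▸ div_nonneg hq hp.le
  have hgt : (0 : ℝ) < ∑ k ∈ Finset.range (m + 1), r ^ k := by
    have h1 : r ^ 0 ≤ ∑ k ∈ Finset.range (m + 1), r ^ k :=
      Finset.single_le_sum (f := fun k => r ^ k) (fun k _ => pow_nonneg hrpos k)
        (Finset.mem_range.mpr (Nat.succ_pos m))
    simpa using lt_of_lt_of_le one_pos h1
  have hf : f 1 - f 0 = 0 := by
    rcases mul_eq_zero.mp hsum with h | h
    · exact absurd h hgt.ne'
    · exact h
  linarith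

end LindAux

open LindAux in
/-- For the Lindley process driven by i.i.d. `±1` steps with
up-probability `p < 1/2`, the distribution function of the maximum `ζ` of the first
regeneration cycle satisfies, for every integer `m ≥ 1`,
`P(ζ ≤ m) = q + p ((q/p)^{m+1} - (q/p)) / ((q/p)^{m+1} - 1)`.
The event `{ζ ≤ m}` is expressed as: every value of the process before the first return
time `τ₀` is at most `m`. -/
theorem lindley_cycle_max_distribution
    {Ω : Type*} [MeasurableSpace Ω] (P : Measure Ω) [IsProbabilityMeasure P]
    (p q : ℝ) (hp : p ∈ Set.Ioo (0 : ℝ) (1 / 2)) (hq : q = 1 - p)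
    (Z : ℕ → Ω → ℤ)
    (hmeas : ∀ n, Measurable (Z n))
    (hindep : iIndepFun Z P)
    (hid : ∀ n, IdentDistrib (Z n) (Z 0) P P)
    (hup : P {ω | Z 0 ω = 1} = ENNReal.ofReal p)
    (hdown : P {ω | Z 0 ω = -1} = ENNReal.ofReal q)
    (X : ℕ → Ω → ℤ)
    (hX0 : ∀ ω, X 0 ω = 0)
    (hXrec : ∀ n ω, X (n + 1) ω = max (X n ω + Z n ω) 0)
    (τ₀ : Ω → ℝ≥0∞)
    (hτ₀ : ∀ ω, τ₀ ω = sInf {t : ℝ≥0∞ | ∃ k : ℕ, t = k ∧ 0 < k ∧ X k ω = 0})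
    (m : ℕ) (hm : 1 ≤ m) :
    P {ω | ∀ k : ℕ, (k : ℝ≥0∞) < τ₀ ω → X k ω ≤ (m : ℤ)} =
      ENNReal.ofReal (q + p * ((q / p) ^ (m + 1) - q / p) / ((q / p) ^ (m + 1) - 1)) := by
  obtain ⟨hp0, hp2⟩ := hp
  have hq0 : 0 < q := by rw [hq]; linarith
  have hpq : p + q = 1 := by rw [hq]; ring
  -- weights
  have hw1 : w P Z 1 = ENNReal.ofReal p := hup
  have hwm : w P Z (-1) = ENNReal.ofReal q := hdown
  have hone : w P Z 1 + w P Z (-1) = 1 := by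
    rw [hw1, hwm, ← ENNReal.ofReal_add hp0.le hq0.le, hpq, ENNReal.ofReal_one]
  -- targets
  have htgt0 : ¬((0:ℤ) < 0 ∧ (0:ℤ) ≤ (m : ℤ)) := by simp
  have htgtm : ¬((0:ℤ) < (m:ℤ) + 1 ∧ (m:ℤ) + 1 ≤ (m : ℤ)) := by omega
  set U : ℤ → ℝ≥0∞ := fun x => ∑' n, Phi P Z m x 0 n with hU
  set V : ℤ → ℝ≥0∞ := fun x => ∑' n, Phi P Z m x ((m:ℤ) + 1) n with hV
  have hUle : ∀ x, U x ≤ 1 := fun x => tsum_Phi_le_one P Z hmeas hindep hid hone htgt0 x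
  have hVle : ∀ x, V x ≤ 1 := fun x => tsum_Phi_le_one P Z hmeas hindep hid hone htgtm x
  have hUfin : ∀ x, U x ≠ ⊤ := fun x => ((hUle x).trans_lt ENNReal.one_lt_top).ne
  have hVfin : ∀ x, V x ≠ ⊤ := fun x => ((hVle x).trans_lt ENNReal.one_lt_top).ne
  -- real-valued versions
  set fu : ℕ → ℝ := fun k => (U k).toReal with hfu
  set fv : ℕ → ℝ := fun k => (V k).toReal with hfv
  have hfu_nonneg : ∀ k, 0 ≤ fu k := fun k => ENNReal.toReal_nonneg
  have hfv_nonneg : ∀ k, 0 ≤ fv k := fun k => ENNReal.toReal_nonneg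
  have hfu_le_one : ∀ k, fu k ≤ 1 := fun k => by
    rw [hfu]; exact ENNReal.toReal_le_of_le_ofReal one_pos.le (by simpa using hUle k)
  have hU_ofReal : ∀ k : ℕ, U k = ENNReal.ofReal (fu k) := fun k =>
    (ENNReal.ofReal_toReal (hUfin k)).symm
  have hV_ofReal : ∀ k : ℕ, V k = ENNReal.ofReal (fv k) := fun k =>
    (ENNReal.ofReal_toReal (hVfin k)).symm
  -- recursions in ℝ
  have toRealize : ∀ (a b : ℝ≥0∞), a ≠ ⊤ → b ≠ ⊤ →
      (ENNReal.ofReal p * a + ENNReal.ofReal q * b).toReal = p * a.toReal + q * b.toReal := by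
    intro a b ha hb
    rw [ENNReal.toReal_add (ENNReal.mul_ne_top ENNReal.ofReal_ne_top ha)
      (ENNReal.mul_ne_top ENNReal.ofReal_ne_top hb), ENNReal.toReal_mul, ENNReal.toReal_mul,
      ENNReal.toReal_ofReal hp0.le, ENNReal.toReal_ofReal hq0.le]
  have hrecU : ∀ k : ℕ, k + 1 ≤ m → U ((k+1:ℕ):ℤ) =
      ENNReal.ofReal p * U ((k+2:ℕ):ℤ) + ENNReal.ofReal q * U ((k:ℕ):ℤ) := by
    intro k hk
    have h := U_rec P Z hmeas hindep hid hone (x := ((k+1:ℕ):ℤ)) htgt0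
      (by push_cast; omega) (by push_cast; omega)
    rw [show ((k+1:ℕ):ℤ) + 1 = ((k+2:ℕ):ℤ) from by push_cast; ring,
      show ((k+1:ℕ):ℤ) + (-1) = ((k:ℕ):ℤ) from by push_cast; ring, hw1, hwm] at h
    simp only [hU]
    exact h
  have hrecV : ∀ k : ℕ, k + 1 ≤ m → V ((k+1:ℕ):ℤ) =
      ENNReal.ofReal p * V ((k+2:ℕ):ℤ) + ENNReal.ofReal q * V ((k:ℕ):ℤ) := by
    intro k hk
    have h := U_rec P Z hmeas hindep hid hone (tgt := (m:ℤ) + 1) (x := ((k+1:ℕ):ℤ)) htgtm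
      (by push_cast; omega) (by push_cast; omega)
    rw [show ((k+1:ℕ):ℤ) + 1 = ((k+2:ℕ):ℤ) from by push_cast; ring,
      show ((k+1:ℕ):ℤ) + (-1) = ((k:ℕ):ℤ) from by push_cast; ring, hw1, hwm] at h
    simp only [hV]
    exact h
  have hfurec : ∀ k, k + 1 ≤ m → fu (k + 1) = p * fu (k + 2) + q * fu k := by
    intro k hk
    simp only [hfu]
    rw [hrecU k hk]
    exact toRealize _ _ (hUfin _) (hUfin _)
  have hfvrec : ∀ k, k + 1 ≤ m → fv (k + 1) = p * fv (k + 2) + q * fv k := by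
    intro k hk
    simp only [hfv]
    rw [hrecV k hk]
    exact toRealize _ _ (hVfin _) (hVfin _)
  -- boundary values
  have hfu0 : fu 0 = 1 := by
    simp only [hfu, hU]
    rw [tsum_Phi_eq_one P Z (mm := m) (x := ((0:ℕ):ℤ)) (tgt := 0)
      (by rintro ⟨h, -⟩; omega) (by push_cast), ENNReal.toReal_one]
  have hfum : fu (m + 1) = 0 := by
    simp only [hfu, hU]
    rw [tsum_Phi_eq_zero P Z (mm := m) (x := ((m+1:ℕ):ℤ)) (tgt := 0)
      (by push_cast; omega) (by push_cast; omega), ENNReal.toReal_zero]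
  have hfv0 : fv 0 = 0 := by
    simp only [hfv, hV]
    rw [tsum_Phi_eq_zero P Z (mm := m) (x := ((0:ℕ):ℤ)) (tgt := (m:ℤ)+1)
      (by rintro ⟨h, -⟩; omega) (by push_cast; omega), ENNReal.toReal_zero]
  have hfvm : fv (m + 1) = 1 := by
    simp only [hfv, hV]
    rw [tsum_Phi_eq_one P Z (mm := m) (x := ((m+1:ℕ):ℤ)) (tgt := (m:ℤ)+1)
      (by push_cast; omega) (by push_cast; ring), ENNReal.toReal_one]
  -- solve the recurrence
  set r : ℝ := q / p with hr
  have hr1 : 1 < r := by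
    rw [hr, lt_div_iff₀ hp0]
    linarith
  have hR1 : 1 < r ^ (m + 1) := one_lt_pow₀ hr1 (Nat.succ_ne_zero m)
  have hD0 : r ^ (m + 1) - 1 ≠ 0 := by linarith
  have h1r : p * r = q := by
    rw [hr]
    field_simp
  have hkey : p * r ^ 2 + q = r := by
    linear_combination (r - 1) * h1r + r * hpq
  set hh : ℕ → ℝ := fun k => (r ^ (m + 1) - r ^ k) / (r ^ (m + 1) - 1) with hhh
  have hhrec : ∀ k, k + 1 ≤ m → hh (k + 1) = p * hh (k + 2) + q * hh k := by
    intro k hk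
    have hnum : r ^ (m+1) - r^(k+1) = p * (r^(m+1) - r^(k+2)) + q * (r^(m+1) - r^k) := by
      linear_combination (-(r^(m+1))) * hpq + r^k * hkey
    simp only [hhh]
    rw [hnum]
    ring
  have huv : fu 1 + fv 1 = 1 := by
    have := rec_one hp0 hpq hr hq0.le (m := m) (fun k => fu k + fv k - 1)
      (fun k hk => by have h1 := hfurec k hk; have h2 := hfvrec k hk; beta_reduce; linarith)
      (by beta_reduce; linarith) (by beta_reduce; linarith)
    beta_reduce at this
    linarith
  have hfu1 : fu 1 = (r ^ (m + 1) - r) / (r ^ (m + 1) - 1) := by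
    have := rec_one hp0 hpq hr hq0.le (m := m) (fun k => fu k - hh k)
      (fun k hk => by have h1 := hfurec k hk; have h2 := hhrec k hk; beta_reduce; linarith)
      (by simp only [hhh]; rw [pow_zero]; rw [div_self hD0]; linarith)
      (by simp only [hhh]; rw [sub_self, zero_div]; linarith)
    have h1 : hh 1 = (r ^ (m + 1) - r) / (r ^ (m + 1) - 1) := by rw [hhh]; simp [pow_one]
    beta_reduce at this
    rw [← h1]
    linarith
  -- measurability of the process
  have hXmeas : ∀ n, Measurable (X n) := by
    intro n
    induction n with
    | zero =>
      have hfun : X 0 = fun _ => (0:ℤ) := funext hX0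
      rw [hfun]; exact measurable_const
    | succ k ih =>
      have hfun : X (k+1) = fun ω => max (X k ω + Z k ω) 0 := funext (hXrec k)
      rw [hfun]
      exact (ih.add (hmeas k)).max measurable_const
  -- the event, re-expressed without `τ₀`
  set A : Set Ω := {ω | ∀ k : ℕ, (∀ j : ℕ, 0 < j → j ≤ k → X j ω ≠ 0) → X k ω ≤ (m:ℤ)}
    with hA
  have hAeq : {ω | ∀ k : ℕ, (k : ℝ≥0∞) < τ₀ ω → X k ω ≤ (m : ℤ)} = A := by
    ext ω
    simp only [hA, Set.mem_setOf_eq]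
    refine forall_congr' fun k => imp_congr ?_ Iff.rfl
    rw [hτ₀ ω]
    constructor
    · intro hlt j hj0 hjk hXj
      have hmem : ((j:ℕ):ℝ≥0∞) ∈ {t : ℝ≥0∞ | ∃ k : ℕ, t = k ∧ 0 < k ∧ X k ω = 0} :=
        ⟨j, rfl, hj0, hXj⟩
      have h2 : sInf {t : ℝ≥0∞ | ∃ k : ℕ, t = k ∧ 0 < k ∧ X k ω = 0} ≤ j := sInf_le hmem
      have h3 : (k:ℝ≥0∞) < (j:ℝ≥0∞) := lt_of_lt_of_le hlt h2
      have h4 : k < j := by exact_mod_cast h3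
      omega
    · intro hall
      have h1 : ((k+1:ℕ):ℝ≥0∞) ≤ sInf {t : ℝ≥0∞ | ∃ k : ℕ, t = k ∧ 0 < k ∧ X k ω = 0} := by
        refine le_sInf ?_
        rintro t ⟨j, rfl, hj0, hXj⟩
        have hjk : k + 1 ≤ j := by
          by_contra hcon
          exact hall j hj0 (by omega) hXj
        exact_mod_cast hjk
      refine lt_of_lt_of_le ?_ h1
      rw [show ((k+1:ℕ):ℝ≥0∞) = (k:ℝ≥0∞) + 1 from by push_cast; ring]
      exact ENNReal.lt_add_right (ENNReal.natCast_ne_top k) one_ne_zero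
  have hAmeas : MeasurableSet A := by
    have hrepr : A = ⋂ k : ℕ,
        ((⋃ j : ℕ, ⋃ (_ : 0 < j ∧ j ≤ k), X j ⁻¹' {0}) ∪ X k ⁻¹' (Set.Iic (m:ℤ))) := by
      ext ω
      simp only [hA, Set.mem_setOf_eq, Set.mem_iInter, Set.mem_union, Set.mem_iUnion,
        Set.mem_preimage, Set.mem_singleton_iff, Set.mem_Iic, exists_prop]
      refine forall_congr' fun k => ?_
      constructor
      · intro h
        by_cases hj : ∃ j, (0 < j ∧ j ≤ k) ∧ X j ω = 0
        · obtain ⟨j, hj1, hj2⟩ := hj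
          exact Or.inl ⟨j, hj1, hj2⟩
        · push_neg at hj
          exact Or.inr (h fun j h1 h2 => hj j ⟨h1, h2⟩)
      · rintro (⟨j, ⟨h1, h2⟩, h3⟩ | h) hall
        · exact absurd h3 (hall j h1 h2)
        · exact h
    rw [hrepr]
    exact MeasurableSet.iInter fun k =>
      ((MeasurableSet.iUnion fun j => MeasurableSet.iUnion fun _ =>
        (hXmeas j) (measurableSet_singleton 0)).union ((hXmeas k) measurableSet_Iic))
  -- identification of the process with the free walk after an initial up-step
  have hWX : ∀ ω, Z 0 ω = 1 → ∀ tgt : ℤ, 0 ≤ tgt → ∀ n : ℕ,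
      Good m 1 tgt n (fun i => Z (1 + i) ω) →
      ∀ k, k ≤ n → X (1 + k) ω = psum 1 (fun i => Z (1 + i) ω) k := by
    intro ω hc tgt htgt n hg k
    induction k with
    | zero =>
      intro _
      have h1 : X 1 ω = max (X 0 ω + Z 0 ω) 0 := hXrec 0 ω
      rw [h1, hX0, hc]
      simp [psum]
    | succ j ih =>
      intro hk
      have hXj := ih (by omega)
      have h1 : X (1 + (j + 1)) ω = max (X (1 + j) ω + Z (1 + j) ω) 0 := hXrec (1 + j) ω
      rw [h1, hXj, ← psum_succ]
      refine max_eq_left ?_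
      rcases eq_or_lt_of_le hk with heq | hlt
      · rw [heq, hg.1]; exact htgt
      · exact (hg.2 (j+1) hlt).1.le
  -- inclusion 1 : a first down-step gives a cycle maximum 0
  have hIncl1 : Z 0 ⁻¹' ({-1} : Set ℤ) ⊆ A := by
    intro ω hc
    simp only [Set.mem_preimage, Set.mem_singleton_iff] at hc
    have hX1 : X 1 ω = 0 := by
      have h1 : X 1 ω = max (X 0 ω + Z 0 ω) 0 := hXrec 0 ω
      rw [h1, hX0, hc]
      simp
    rw [hA]
    intro k hall
    cases k with
    | zero => rw [hX0]; omega
    | succ j => exact absurd hX1 (hall 1 one_pos (by omega))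
  -- inclusion 2 : up-step followed by a return to 0 within `(0, m]`
  have hIncl2 : Z 0 ⁻¹' ({1} : Set ℤ) ∩ Rev Z m 1 1 0 ⊆ A := by
    rintro ω ⟨hc, hrev⟩
    simp only [Set.mem_preimage, Set.mem_singleton_iff] at hc
    obtain ⟨n, hg⟩ := Set.mem_iUnion.mp hrev
    have hg' : Good m 1 0 n (fun i => Z (1 + i) ω) := hg
    have hXW := hWX ω hc 0 le_rfl n hg'
    have hXn1 : X (1 + n) ω = 0 := by rw [hXW n le_rfl]; exact hg'.1
    rw [hA]
    intro k hall
    have hkn : k ≤ n := by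
      by_contra hcon
      exact hall (1 + n) (by omega) (by omega) hXn1
    cases k with
    | zero => rw [hX0]; omega
    | succ j =>
      have hj : X (1 + j) ω = psum 1 (fun i => Z (1 + i) ω) j := hXW j (by omega)
      rw [show j + 1 = 1 + j from by omega, hj]
      exact (hg'.2 j (by omega)).2
  -- inclusion 3 : up-step followed by an escape to `m+1` forces the maximum above `m`
  have hIncl3 : Z 0 ⁻¹' ({1} : Set ℤ) ∩ Rev Z m 1 1 ((m:ℤ)+1) ⊆ Aᶜ := by
    rintro ω ⟨hc, hrev⟩
    simp only [Set.mem_preimage, Set.mem_singleton_iff] at hc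
    obtain ⟨n, hg⟩ := Set.mem_iUnion.mp hrev
    have hg' : Good m 1 ((m:ℤ)+1) n (fun i => Z (1 + i) ω) := hg
    have hXW := hWX ω hc ((m:ℤ)+1) (by omega) n hg'
    intro hmem
    rw [hA] at hmem
    have hpos : ∀ j : ℕ, 0 < j → j ≤ 1 + n → X j ω ≠ 0 := by
      intro j hj0 hjn
      have hj : X (1 + (j - 1)) ω = psum 1 (fun i => Z (1 + i) ω) (j - 1) :=
        hXW (j - 1) (by omega)
      rw [show 1 + (j - 1) = j from by omega] at hj
      rw [hj]
      rcases eq_or_lt_of_le (show j - 1 ≤ n from by omega) with heq | hlt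
      · rw [heq, hg'.1]; omega
      · have := (hg'.2 (j - 1) hlt).1; omega
    have hle := hmem (1 + n) (fun j hj0 hjk => hpos j hj0 hjk)
    rw [hXW n le_rfl, hg'.1] at hle
    omega
  -- conversion of `U 1`, `V 1`
  have hU1 : U 1 = ENNReal.ofReal (fu 1) := by
    rw [show (1:ℤ) = ((1:ℕ):ℤ) from by norm_num]
    exact hU_ofReal 1
  have hV1 : V 1 = ENNReal.ofReal (fv 1) := by
    rw [show (1:ℤ) = ((1:ℕ):ℤ) from by norm_num]
    exact hV_ofReal 1
  -- lower bound
  have hRev0meas : MeasurableSet (Rev Z m 1 1 0) :=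
    MeasurableSet.iUnion fun n => measurableSet_Ev Z hmeas m 1 1 0 n
  have hdisj12 : Disjoint (Z 0 ⁻¹' ({-1} : Set ℤ)) (Z 0 ⁻¹' ({1} : Set ℤ) ∩ Rev Z m 1 1 0) := by
    rw [Set.disjoint_left]
    rintro ω h1 ⟨h2, -⟩
    simp only [Set.mem_preimage, Set.mem_singleton_iff] at h1 h2
    omega
  have hlow : ENNReal.ofReal q + ENNReal.ofReal p * U 1 ≤ P A := by
    have hsub : Z 0 ⁻¹' ({-1} : Set ℤ) ∪ (Z 0 ⁻¹' ({1} : Set ℤ) ∩ Rev Z m 1 1 0) ⊆ A :=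
      Set.union_subset hIncl1 hIncl2
    have hun := measure_union (μ := P) hdisj12
      (((hmeas 0) (measurableSet_singleton _)).inter hRev0meas)
    have h1 : P (Z 0 ⁻¹' ({-1} : Set ℤ)) = ENNReal.ofReal q := hdown
    have h2 : P (Z 0 ⁻¹' ({1} : Set ℤ) ∩ Rev Z m 1 1 0) = ENNReal.ofReal p * U 1 := by
      have h3 := meas_inter_Rev P Z hmeas hindep hid hone htgt0 (show 0 < 1 from one_pos) 1 1
      rw [hw1] at h3
      rw [h3]
      try simp only [hU]
    calc ENNReal.ofReal q + ENNReal.ofReal p * U 1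
        = P (Z 0 ⁻¹' ({-1} : Set ℤ) ∪ (Z 0 ⁻¹' ({1} : Set ℤ) ∩ Rev Z m 1 1 0)) := by
          rw [hun, h1, h2]
      _ ≤ P A := measure_mono hsub
  -- upper bound
  have hupper : P A ≤ 1 - ENNReal.ofReal p * V 1 := by
    have h2 : P (Z 0 ⁻¹' ({1} : Set ℤ) ∩ Rev Z m 1 1 ((m:ℤ)+1)) = ENNReal.ofReal p * V 1 := by
      have h3 := meas_inter_Rev P Z hmeas hindep hid hone htgtm (show 0 < 1 from one_pos) 1 1
      rw [hw1] at h3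
      rw [h3]
      try simp only [hV]
    have hcompl : ENNReal.ofReal p * V 1 ≤ P Aᶜ := h2 ▸ measure_mono hIncl3
    have hsum2 : P A + ENNReal.ofReal p * V 1 ≤ 1 := by
      calc P A + ENNReal.ofReal p * V 1 ≤ P A + P Aᶜ := add_le_add le_rfl hcompl
        _ = 1 := by rw [measure_add_measure_compl hAmeas, measure_univ]
    exact ENNReal.le_sub_of_add_le_right
      (ENNReal.mul_ne_top ENNReal.ofReal_ne_top (hVfin 1)) hsum2
  -- combine
  have hval : P A = ENNReal.ofReal (q + p * fu 1) := by
    refine le_antisymm ?_ ?_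
    · calc P A ≤ 1 - ENNReal.ofReal p * V 1 := hupper
        _ = 1 - ENNReal.ofReal (p * fv 1) := by rw [hV1, ← ENNReal.ofReal_mul hp0.le]
        _ = ENNReal.ofReal (1 - p * fv 1) := by
            have h5 := ENNReal.ofReal_sub 1 (show 0 ≤ p * fv 1 by positivity)
            rw [ENNReal.ofReal_one] at h5
            exact h5.symm
        _ = ENNReal.ofReal (q + p * fu 1) := by
            congr 1
            have h6 : fv 1 = 1 - fu 1 := by linarith
            rw [h6, hq]; ring
    · calc ENNReal.ofReal (q + p * fu 1)
          = ENNReal.ofReal q + ENNReal.ofReal (p * fu 1) :=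
            ENNReal.ofReal_add hq0.le (by positivity)
        _ = ENNReal.ofReal q + ENNReal.ofReal p * U 1 := by
            rw [ENNReal.ofReal_mul hp0.le, hU1]
        _ ≤ P A := hlow
  rw [hAeq, hval, hfu1]
  congr 1
  ring
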